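/- Let F = ℝ or ℂ. Let d₁, d₂, d₃ be positive even integers and N₁, N₂, N₃ positive reals with Nᵢ > dᵢ/2 + 1. Then there is a constant C (depending on the Nᵢ, dᵢ) such that for all v = (v₁,v₂,v₃) with each vᵢ ∈ F^{dᵢ} ∖ {0}, ∫_{(F^×)³} ∏_{i=1}^{3} max(|aᵢ⁻¹vᵢ|,1)^{−Nᵢ} |aᵢ|^{−1−dᵢ/2} 1_{|aᵢ| ≤ 1} d^×a ≤ C · ∏_{i=1}^{3} max(|vᵢ|,1)^{−Nᵢ} min(|vᵢ|,1)^{−1−dᵢ/2}. -/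

import Mathlib

open MeasureTheory

lemma aux_lintegral_pi_prod : ∀ {n : ℕ} (f : Fin n → ℝ → ENNReal),
    (∀ i, Measurable (f i)) →
    ∫⁻ a : Fin n → ℝ, ∏ i, f i (a i) = ∏ i, ∫⁻ x : ℝ, f i x := by
  intro n
  induction n with
  | zero =>
    intro f hf
    have huniv : (volume : Measure (Fin 0 → ℝ)) Set.univ = 1 := by
      simpa using MeasureTheory.volume_pi_pi (fun _ : Fin 0 => (Set.univ : Set ℝ))
    simp [huniv]
  | succ n ih =>
    intro f hf
    have hF : Measurable fun a : Fin (n+1) → ℝ => ∏ i, f i (a i) :=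
      Finset.measurable_prod _ fun i _ => (hf i).comp (measurable_pi_apply i)
    have hmp : MeasurePreserving
        (⇑(MeasurableEquiv.piFinSuccAbove (fun _ : Fin (n+1) => ℝ) 0).symm) volume volume :=
      (volume_preserving_piFinSuccAbove (fun _ : Fin (n+1) => ℝ) 0).symm _
    have h1 : ∫⁻ p : ℝ × (Fin n → ℝ),
        (∏ i, f i ((MeasurableEquiv.piFinSuccAbove (fun _ : Fin (n+1) => ℝ) 0).symm p i)) =
        ∫⁻ a : Fin (n+1) → ℝ, ∏ i, f i (a i) := hmp.lintegral_comp hF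
    have h2 : ∀ p : ℝ × (Fin n → ℝ),
        (∏ i, f i ((MeasurableEquiv.piFinSuccAbove (fun _ : Fin (n+1) => ℝ) 0).symm p i)) =
        f 0 p.1 * ∏ j : Fin n, f j.succ (p.2 j) := by
      intro p
      rw [Fin.prod_univ_succ]
      have h0 : (MeasurableEquiv.piFinSuccAbove (fun _ : Fin (n+1) => ℝ) 0).symm p 0
          = p.1 := by
        simp [MeasurableEquiv.piFinSuccAbove_symm_apply]
      have hsa : ∀ j : Fin n,
          (MeasurableEquiv.piFinSuccAbove (fun _ : Fin (n+1) => ℝ) 0).symm p j.succ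
            = p.2 j := by
        intro j
        have hj : (0 : Fin (n+1)).succAbove j = j.succ := by
          simp [Fin.succAbove_zero]
        rw [MeasurableEquiv.piFinSuccAbove_symm_apply, Fin.insertNthEquiv_apply, ← hj]
        exact Fin.insertNth_apply_succAbove (α := fun _ => ℝ) 0 p.1 p.2 j
      rw [h0]
      exact congrArg _ (Finset.prod_congr rfl fun j _ => by rw [hsa j])
    have hG : Measurable fun y : Fin n → ℝ => ∏ j : Fin n, f j.succ (y j) :=
      Finset.measurable_prod _ fun j _ => (hf j.succ).comp (measurable_pi_apply j)
    have hmeas2 : Measurable fun p : ℝ × (Fin n → ℝ) =>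
        f 0 p.1 * ∏ j : Fin n, f j.succ (p.2 j) :=
      ((hf 0).comp measurable_fst).mul (hG.comp measurable_snd)
    calc ∫⁻ a : Fin (n+1) → ℝ, ∏ i, f i (a i)
        = ∫⁻ p : ℝ × (Fin n → ℝ), f 0 p.1 * ∏ j : Fin n, f j.succ (p.2 j) := by
          rw [← h1]; exact lintegral_congr fun p => h2 p
      _ = ∫⁻ x : ℝ, ∫⁻ y : Fin n → ℝ, f 0 x * ∏ j : Fin n, f j.succ (y j) := by
          rw [Measure.volume_eq_prod, lintegral_prod _ hmeas2.aemeasurable]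
      _ = ∫⁻ x : ℝ, f 0 x * ∫⁻ y : Fin n → ℝ, ∏ j : Fin n, f j.succ (y j) :=
          lintegral_congr fun x => lintegral_const_mul _ hG
      _ = (∫⁻ x : ℝ, f 0 x) * ∫⁻ y : Fin n → ℝ, ∏ j : Fin n, f j.succ (y j) :=
          lintegral_mul_const _ (hf 0)
      _ = ∏ i, ∫⁻ x : ℝ, f i x := by
          rw [ih (fun j => f j.succ) (fun j => hf j.succ), Fin.prod_univ_succ]

/-- The one-dimensional estimate (bound for Lemma 6.1 type integrals). -/
lemma aux_one_dim (N dr : ℝ) (hdr : 0 < dr) (hN : dr / 2 + 1 < N) (k : ℕ) :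
    ∃ C : ℝ, 0 < C ∧ ∀ v : Fin k → ℝ, v ≠ 0 →
      (∫⁻ a : ℝ, ENNReal.ofReal ((max ‖a⁻¹ • v‖ 1) ^ (-N) * |a| ^ (-1 - dr / 2) *
          (if |a| ≤ 1 then 1 else 0) / |a|)) ≤
        ENNReal.ofReal (C * ((max ‖v‖ 1) ^ (-N) * (min ‖v‖ 1) ^ (-1 - dr / 2))) := by
  set s : ℝ := N - 2 - dr / 2 with hs_def
  set q : ℝ := -1 - dr / 2 with hq_def
  have hs : (-1 : ℝ) < s := by rw [hs_def]; linarith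
  have hs1 : (0 : ℝ) < s + 1 := by linarith
  have hq : q < 0 := by rw [hq_def]; linarith
  have hq' : q = -(dr / 2 + 1) := by rw [hq_def]; ring
  have hc : (0 : ℝ) < dr / 2 + 1 := by linarith
  refine ⟨2 / (s + 1) + 2 / (dr / 2 + 1), by positivity, ?_⟩
  intro v hv
  set t : ℝ := ‖v‖ with ht_def
  have ht : 0 < t := norm_pos_iff.2 hv
  set m : ℝ := min t 1 with hm_def
  have hm0 : 0 < m := lt_min ht one_pos
  have hm1 : m ≤ 1 := min_le_right _ _
  have hmt : m ≤ t := min_le_left _ _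
  set g₁ : ℝ → ENNReal :=
    fun a => ENNReal.ofReal (t ^ (-N)) * ENNReal.ofReal (|a| ^ s) with hg₁
  set g₂ : ℝ → ENNReal := fun a => ENNReal.ofReal (|a| ^ (q - 1)) with hg₂
  set A : Set ℝ := Set.Icc (-m) m with hA
  set B : Set ℝ := Set.Ico (-1) (-m) ∪ Set.Ioc m 1 with hB
  have hAm : MeasurableSet A := measurableSet_Icc
  have hBm : MeasurableSet B := measurableSet_Ico.union measurableSet_Ioc
  have habsm : Measurable fun a : ℝ => ENNReal.ofReal (|a| ^ s) :=
    (measurable_abs.pow measurable_const).ennreal_ofReal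
  have hg₁m : Measurable g₁ := measurable_const.mul habsm
  have hg₂m : Measurable g₂ := (measurable_abs.pow measurable_const).ennreal_ofReal
  -- a.e. nonzero
  have h0ae : ∀ᵐ a : ℝ, a ≠ 0 := by
    have h0 : (volume : Measure ℝ) {0} = 0 := measure_singleton 0
    rw [ae_iff]
    simpa [not_not, Set.setOf_eq_eq_singleton] using h0
  -- pointwise bound
  have hpt : ∀ᵐ a : ℝ, ENNReal.ofReal ((max ‖a⁻¹ • v‖ 1) ^ (-N) * |a| ^ q *
      (if |a| ≤ 1 then 1 else 0) / |a|) ≤ A.indicator g₁ a + B.indicator g₂ a := by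
    filter_upwards [h0ae] with a ha
    have habs : 0 < |a| := abs_pos.2 ha
    by_cases h1 : |a| ≤ 1
    · rw [if_pos h1]
      have hnorm : ‖a⁻¹ • v‖ = |a|⁻¹ * t := by
        rw [norm_smul, Real.norm_eq_abs, abs_inv, ht_def]
      by_cases h2 : |a| ≤ m
      · have hmem : a ∈ A := by
          rw [hA, Set.mem_Icc]
          constructor
          · linarith [neg_abs_le a]
          · linarith [le_abs_self a]
        have hmax : max ‖a⁻¹ • v‖ 1 = |a|⁻¹ * t := by
          rw [hnorm]
          refine max_eq_left ?_
          rw [le_inv_mul_iff₀ habs, mul_one]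
          exact h2.trans hmt
        have hval : (|a|⁻¹ * t) ^ (-N) * |a| ^ q * 1 / |a| = t ^ (-N) * |a| ^ s := by
          have e1 : (|a|⁻¹) ^ (-N) = |a| ^ N := by
            rw [← Real.rpow_neg_one, ← Real.rpow_mul (abs_nonneg a)]
            norm_num
          rw [Real.mul_rpow (by positivity) ht.le, e1, div_eq_mul_inv,
            ← Real.rpow_neg_one |a|]
          calc |a| ^ N * t ^ (-N) * |a| ^ q * 1 * |a| ^ (-1 : ℝ)
              = t ^ (-N) * (|a| ^ N * |a| ^ q * |a| ^ (-1 : ℝ)) := by ring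
            _ = t ^ (-N) * |a| ^ s := by
                rw [← Real.rpow_add habs, ← Real.rpow_add habs]
                congr 1
                rw [hs_def, hq_def]; ring
        calc ENNReal.ofReal ((max ‖a⁻¹ • v‖ 1) ^ (-N) * |a| ^ q * 1 / |a|)
            = A.indicator g₁ a := by
              rw [Set.indicator_of_mem hmem, hg₁, hmax, hval,
                ENNReal.ofReal_mul (Real.rpow_nonneg ht.le _)]
          _ ≤ A.indicator g₁ a + B.indicator g₂ a := self_le_add_right _ _
      · push_neg at h2
        have htlt : t < |a| := by
          have hmq : m = t := by
            rcases le_total t 1 with h | h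
            · exact min_eq_left h
            · exfalso
              have hm1' : m = 1 := min_eq_right h
              rw [hm1'] at h2
              linarith
          rw [hmq] at h2
          exact h2
        have hmax : max ‖a⁻¹ • v‖ 1 = 1 := by
          rw [hnorm]
          refine max_eq_right ?_
          rw [inv_mul_eq_div]
          exact (div_le_one habs).2 htlt.le
        have hmem : a ∈ B := by
          rw [hB]
          rcases lt_or_ge a 0 with hlt | hge
          · left
            have habs' : |a| = -a := abs_of_neg hlt
            rw [habs'] at h1 h2
            exact ⟨by linarith, by linarith⟩
          · right
            have habs' : |a| = a := abs_of_nonneg hge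
            rw [habs'] at h1 h2
            exact ⟨h2, h1⟩
        have hval : (1 : ℝ) ^ (-N) * |a| ^ q * 1 / |a| = |a| ^ (q - 1) := by
          rw [Real.one_rpow, one_mul, mul_one, div_eq_mul_inv, ← Real.rpow_neg_one |a|,
            ← Real.rpow_add habs]
          congr 1 <;> ring
        calc ENNReal.ofReal ((max ‖a⁻¹ • v‖ 1) ^ (-N) * |a| ^ q * 1 / |a|)
            = B.indicator g₂ a := by
              rw [Set.indicator_of_mem hmem, hg₂, hmax, hval]
          _ ≤ A.indicator g₁ a + B.indicator g₂ a := le_add_self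
    · rw [if_neg h1]
      simp only [mul_zero, zero_div, ENNReal.ofReal_zero]
      exact zero_le
  -- reflection
  have hnegIcc : Set.Icc (-m) 0 = Neg.neg ⁻¹' (Set.Icc 0 m) := by
    ext x
    simp only [Set.mem_preimage, Set.mem_Icc]
    constructor <;> intro h <;> constructor <;> linarith [h.1, h.2]
  have hnegIco : Set.Ico (-1 : ℝ) (-m) = Neg.neg ⁻¹' (Set.Ioc m 1) := by
    ext x
    simp only [Set.mem_preimage, Set.mem_Ico, Set.mem_Ioc]
    constructor <;> intro h <;> constructor <;> linarith [h.1, h.2]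
  have hemb : MeasurableEmbedding (Neg.neg : ℝ → ℝ) :=
    (MeasurableEquiv.neg ℝ).measurableEmbedding
  have hnegint : ∀ (r : ℝ) (S : Set ℝ),
      ∫⁻ a in Neg.neg ⁻¹' S, ENNReal.ofReal (|a| ^ r) =
        ∫⁻ a in S, ENNReal.ofReal (|a| ^ r) := by
    intro r S
    have h := (Measure.measurePreserving_neg (volume : Measure ℝ)).setLIntegral_comp_preimage_emb
      hemb (fun x => ENNReal.ofReal (|x| ^ r)) S
    simpa [abs_neg] using h
  -- basic integrals
  have hV₁ : (0:ℝ) ≤ m ^ (s + 1) / (s + 1) := by positivity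
  have hmq1 : 1 ≤ m ^ q := Real.one_le_rpow_of_pos_of_le_one_of_nonpos hm0 hm1 hq.le
  have hV₂ : (0:ℝ) ≤ (1 - m ^ q) / q :=
    div_nonneg_iff.mpr (Or.inr ⟨by linarith, hq.le⟩)
  have hKs : ∫⁻ a in Set.Icc 0 m, ENNReal.ofReal (|a| ^ s) =
      ENNReal.ofReal (m ^ (s + 1) / (s + 1)) := by
    rw [setLIntegral_congr (Ioc_ae_eq_Icc).symm]
    rw [setLIntegral_congr_fun measurableSet_Ioc
      (fun ⦃a⦄ (ha : a ∈ Set.Ioc 0 m) => show ENNReal.ofReal (|a| ^ s) = ENNReal.ofReal (a ^ s) by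
        rw [abs_of_pos ha.1])]
    have hint : IntegrableOn (fun a : ℝ => a ^ s) (Set.Ioc 0 m) volume :=
      (intervalIntegral.intervalIntegrable_rpow' hs).1
    have hae : 0 ≤ᶠ[ae (volume.restrict (Set.Ioc 0 m))] fun a : ℝ => a ^ s := by
      filter_upwards [ae_restrict_mem measurableSet_Ioc] with a ha
      exact Real.rpow_nonneg ha.1.le s
    rw [← ofReal_integral_eq_lintegral_ofReal hint hae]
    congr 1
    rw [← intervalIntegral.integral_of_le hm0.le, integral_rpow (Or.inl hs),
      Real.zero_rpow (by linarith : s + 1 ≠ 0), sub_zero]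
  have hKq : ∫⁻ a in Set.Ioc m 1, ENNReal.ofReal (|a| ^ (q - 1)) =
      ENNReal.ofReal ((1 - m ^ q) / q) := by
    rw [setLIntegral_congr_fun measurableSet_Ioc
      (fun ⦃a⦄ (ha : a ∈ Set.Ioc m 1) =>
        show ENNReal.ofReal (|a| ^ (q - 1)) = ENNReal.ofReal (a ^ (q - 1)) by
        rw [abs_of_pos (hm0.trans ha.1)])]
    have h0not : (0 : ℝ) ∉ Set.uIcc m 1 := by
      rw [Set.uIcc_of_le hm1]
      intro h
      exact absurd h.1 (not_le.2 hm0)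
    have hint : IntegrableOn (fun a : ℝ => a ^ (q - 1)) (Set.Ioc m 1) volume :=
      (intervalIntegral.intervalIntegrable_rpow (Or.inr h0not)).1
    have hae : 0 ≤ᶠ[ae (volume.restrict (Set.Ioc m 1))] fun a : ℝ => a ^ (q - 1) := by
      filter_upwards [ae_restrict_mem measurableSet_Ioc] with a ha
      exact Real.rpow_nonneg (hm0.trans ha.1).le _
    rw [← ofReal_integral_eq_lintegral_ofReal hint hae]
    congr 1
    rw [← intervalIntegral.integral_of_le hm1,
      integral_rpow (Or.inr ⟨fun h => hq.ne (by linarith), h0not⟩)]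
    have hqq : q - 1 + 1 = q := by ring
    rw [hqq, Real.one_rpow]
  -- the two pieces
  have hIA : ∫⁻ a in A, g₁ a =
      ENNReal.ofReal (t ^ (-N) * (2 * (m ^ (s + 1) / (s + 1)))) := by
    simp only [hg₁]
    rw [lintegral_const_mul _ habsm]
    have hsplitA : ∫⁻ a in A, ENNReal.ofReal (|a| ^ s) =
        (∫⁻ a in Set.Icc (-m) 0, ENNReal.ofReal (|a| ^ s)) +
          ∫⁻ a in Set.Ioc 0 m, ENNReal.ofReal (|a| ^ s) := by
      rw [hA, ← Set.Icc_union_Ioc_eq_Icc (by linarith : -m ≤ 0) hm0.le]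
      refine lintegral_union measurableSet_Ioc ?_
      refine Set.disjoint_left.2 fun x hx hx' => ?_
      exact absurd hx.2 (not_le.2 hx'.1)
    rw [hsplitA, hnegIcc, hnegint s (Set.Icc 0 m), hKs,
      setLIntegral_congr (Ioc_ae_eq_Icc (a := (0:ℝ)) (b := m)), hKs,
      ← ENNReal.ofReal_add hV₁ hV₁, ← ENNReal.ofReal_mul (Real.rpow_nonneg ht.le _)]
    congr 1
    ring
  have hIB : ∫⁻ a in B, g₂ a = ENNReal.ofReal (2 * ((1 - m ^ q) / q)) := by
    have hdisj : Disjoint (Set.Ico (-1 : ℝ) (-m)) (Set.Ioc m 1) := by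
      refine Set.disjoint_left.2 fun x hx hx' => ?_
      have h1 := hx.2
      have h2 := hx'.1
      linarith
    rw [hB, lintegral_union measurableSet_Ioc hdisj]
    simp only [hg₂]
    rw [hnegIco, hnegint (q - 1) (Set.Ioc m 1), hKq, ← ENNReal.ofReal_add hV₂ hV₂]
    congr 1
    ring
  -- real-number estimate
  have hid : t ^ (-N) * m ^ N = (max t 1) ^ (-N) := by
    rcases le_total t 1 with h | h
    · have hmm : m = t := min_eq_left h
      rw [hmm, max_eq_right h, Real.one_rpow, ← Real.rpow_add ht]
      norm_num
    · have hmm : m = 1 := min_eq_right h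
      rw [hmm, max_eq_left h, Real.one_rpow, mul_one]
  have hm_sum : m ^ (s + 1) = m ^ N * m ^ q := by
    rw [← Real.rpow_add hm0]
    congr 1
    rw [hs_def, hq_def]; ring
  have hfirst : t ^ (-N) * (2 * (m ^ (s + 1) / (s + 1))) =
      (2 / (s + 1)) * ((max t 1) ^ (-N) * m ^ q) := by
    rw [hm_sum, ← hid]; ring
  have hmaxnn : (0:ℝ) ≤ (max t 1) ^ (-N) :=
    Real.rpow_nonneg (le_trans zero_le_one (le_max_right t 1)) _
  have hsecond : 2 * ((1 - m ^ q) / q) ≤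
      (2 / (dr / 2 + 1)) * ((max t 1) ^ (-N) * m ^ q) := by
    rcases le_total t 1 with h | h
    · rw [max_eq_right h, Real.one_rpow, one_mul]
      have heq : (1 - m ^ q) / q = (m ^ q - 1) / (dr / 2 + 1) := by
        rw [hq', div_neg, ← neg_div, neg_sub]
      rw [heq]
      have h2 : (m ^ q - 1) / (dr / 2 + 1) ≤ m ^ q / (dr / 2 + 1) := by
        gcongr
        linarith
      calc 2 * ((m ^ q - 1) / (dr / 2 + 1)) ≤ 2 * (m ^ q / (dr / 2 + 1)) := by linarith
        _ = 2 / (dr / 2 + 1) * m ^ q := by ring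
    · have hmm : m = 1 := min_eq_right h
      rw [hmm, Real.one_rpow]
      have hlhs : 2 * (((1:ℝ) - 1) / q) = 0 := by ring
      rw [hlhs]
      have : (0:ℝ) ≤ (max t 1) ^ (-N) * 1 := by
        rw [mul_one]; exact hmaxnn
      positivity
  have hreal : t ^ (-N) * (2 * (m ^ (s + 1) / (s + 1))) + 2 * ((1 - m ^ q) / q) ≤
      (2 / (s + 1) + 2 / (dr / 2 + 1)) * ((max t 1) ^ (-N) * m ^ q) := by
    have hexp : (2 / (s + 1) + 2 / (dr / 2 + 1)) * ((max t 1) ^ (-N) * m ^ q) =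
        (2 / (s + 1)) * ((max t 1) ^ (-N) * m ^ q) +
          (2 / (dr / 2 + 1)) * ((max t 1) ^ (-N) * m ^ q) := by ring
    linarith [hfirst, hsecond]
  -- conclude
  calc ∫⁻ a : ℝ, ENNReal.ofReal ((max ‖a⁻¹ • v‖ 1) ^ (-N) * |a| ^ q *
        (if |a| ≤ 1 then 1 else 0) / |a|)
      ≤ ∫⁻ a : ℝ, (A.indicator g₁ a + B.indicator g₂ a) := lintegral_mono_ae hpt
    _ = (∫⁻ a in A, g₁ a) + ∫⁻ a in B, g₂ a := by
        rw [lintegral_add_left (hg₁m.indicator hAm), lintegral_indicator hAm,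
          lintegral_indicator hBm]
    _ = ENNReal.ofReal (t ^ (-N) * (2 * (m ^ (s + 1) / (s + 1)))) +
          ENNReal.ofReal (2 * ((1 - m ^ q) / q)) := by rw [hIA, hIB]
    _ = ENNReal.ofReal (t ^ (-N) * (2 * (m ^ (s + 1) / (s + 1))) +
          2 * ((1 - m ^ q) / q)) := by
        rw [ENNReal.ofReal_add (by positivity) (by positivity)]
    _ ≤ ENNReal.ofReal ((2 / (s + 1) + 2 / (dr / 2 + 1)) *
          ((max t 1) ^ (-N) * m ^ q)) := ENNReal.ofReal_le_ofReal hreal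

theorem stmt11 (d : Fin 3 → ℕ) (hd : ∀ i, 0 < d i) (hde : ∀ i, Even (d i))
    (N : Fin 3 → ℝ) (hN : ∀ i, (d i : ℝ) / 2 + 1 < N i) :
    ∃ C : ℝ, 0 < C ∧ ∀ v : (i : Fin 3) → (Fin (d i) → ℝ), (∀ i, v i ≠ 0) →
      (∫⁻ a : Fin 3 → ℝ, ENNReal.ofReal (∏ i,
          ((max ‖(a i)⁻¹ • v i‖ 1) ^ (-N i) * |a i| ^ (-1 - (d i : ℝ) / 2) *
            (if |a i| ≤ 1 then 1 else 0) / |a i|))) ≤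
        ENNReal.ofReal (C * ∏ i,
          (max ‖v i‖ 1) ^ (-N i) * (min ‖v i‖ 1) ^ (-1 - (d i : ℝ) / 2)) := by
  have h := fun i : Fin 3 =>
    aux_one_dim (N i) (d i) (by exact_mod_cast hd i) (hN i) (d i)
  choose C hCpos hC using h
  refine ⟨∏ i, C i, Finset.prod_pos (fun i _ => hCpos i), ?_⟩
  intro v hv
  have hnn : ∀ (a : Fin 3 → ℝ) (i : Fin 3), 0 ≤
      (max ‖(a i)⁻¹ • v i‖ 1) ^ (-N i) * |a i| ^ (-1 - (d i : ℝ) / 2) *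
        (if |a i| ≤ 1 then 1 else 0) / |a i| := by
    intro a i
    apply div_nonneg _ (abs_nonneg _)
    refine mul_nonneg (mul_nonneg ?_ ?_) ?_
    · exact Real.rpow_nonneg (le_trans zero_le_one (le_max_right _ _)) _
    · exact Real.rpow_nonneg (abs_nonneg _) _
    · split <;> norm_num
  have hfmeas : ∀ i : Fin 3, Measurable fun x : ℝ =>
      ENNReal.ofReal ((max ‖x⁻¹ • v i‖ 1) ^ (-N i) * |x| ^ (-1 - (d i : ℝ) / 2) *
        (if |x| ≤ 1 then 1 else 0) / |x|) := by
    intro i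
    apply Measurable.ennreal_ofReal
    refine Measurable.div ?_ measurable_abs
    refine Measurable.mul (Measurable.mul ?_ ?_) ?_
    · exact ((measurable_inv.smul_const (v i)).norm.max measurable_const).pow
        measurable_const
    · exact measurable_abs.pow measurable_const
    · exact Measurable.ite (measurableSet_le measurable_abs measurable_const)
        measurable_const measurable_const
  have hRnn : ∀ i : Fin 3, 0 ≤
      (max ‖v i‖ 1) ^ (-N i) * (min ‖v i‖ 1) ^ (-1 - (d i : ℝ) / 2) := by
    intro i
    refine mul_nonneg ?_ ?_
    · exact Real.rpow_nonneg (le_trans zero_le_one (le_max_right _ _)) _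
    · exact Real.rpow_nonneg (le_min (norm_nonneg _) zero_le_one) _
  calc (∫⁻ a : Fin 3 → ℝ, ENNReal.ofReal (∏ i,
          ((max ‖(a i)⁻¹ • v i‖ 1) ^ (-N i) * |a i| ^ (-1 - (d i : ℝ) / 2) *
            (if |a i| ≤ 1 then 1 else 0) / |a i|)))
      = ∫⁻ a : Fin 3 → ℝ, ∏ i, ENNReal.ofReal
          ((max ‖(a i)⁻¹ • v i‖ 1) ^ (-N i) * |a i| ^ (-1 - (d i : ℝ) / 2) *
            (if |a i| ≤ 1 then 1 else 0) / |a i|) := by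
        refine lintegral_congr fun a => ?_
        exact ENNReal.ofReal_prod_of_nonneg (fun i _ => hnn a i)
    _ = ∏ i, ∫⁻ x : ℝ, ENNReal.ofReal
          ((max ‖x⁻¹ • v i‖ 1) ^ (-N i) * |x| ^ (-1 - (d i : ℝ) / 2) *
            (if |x| ≤ 1 then 1 else 0) / |x|) :=
        aux_lintegral_pi_prod _ hfmeas
    _ ≤ ∏ i, ENNReal.ofReal (C i *
          ((max ‖v i‖ 1) ^ (-N i) * (min ‖v i‖ 1) ^ (-1 - (d i : ℝ) / 2))) :=
        Finset.prod_le_prod' fun i _ => hC i (v i) (hv i)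
    _ = ENNReal.ofReal (∏ i, C i *
          ((max ‖v i‖ 1) ^ (-N i) * (min ‖v i‖ 1) ^ (-1 - (d i : ℝ) / 2))) :=
        (ENNReal.ofReal_prod_of_nonneg
          (fun i _ => mul_nonneg (hCpos i).le (hRnn i))).symm
    _ = ENNReal.ofReal ((∏ i, C i) * ∏ i,
          (max ‖v i‖ 1) ^ (-N i) * (min ‖v i‖ 1) ^ (-1 - (d i : ℝ) / 2)) := by
        rw [Finset.prod_mul_distrib]
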